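/- Let α, β, θ, γ > 0. Define p₁ = ∑_{i=1}^∞ α^i / ∏_{j=1}^i (β + jθ), p₂ = ∑_{i=1}^∞ β^i / ∏_{j=1}^i (α + jγ), π₀ = (1 + p₁ + p₂)^{−1}, and for i ∈ ℕ set π_i = π₀ · α^i / ∏_{j=1}^i (β + jθ) and π_{−i} = π₀ · β^i / ∏_{j=1}^i (α + jγ). Then ∑_{i∈ℤ} π_i = 1, every π_i > 0, and the detailed balance equations hold: for every i ∈ ℤ, (α + i⁻·γ)·π_i = (β + (i+1)⁺·θ)·π_{i+1}, where i⁺ = max(i, 0) and i⁻ = max(−i, 0). (Thus (π_i)_{i∈ℤ} is the stationary distribution of the birth–death chain on ℤ with birth rates λ_i = α + i⁻γ and death rates μ_i = β + i⁺θ.) -/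

import Mathlib

/-- For `α, β, θ, γ > 0`, with `p₁, p₂` the two convergent series,
`π₀ = (1 + p₁ + p₂)⁻¹`, and `π_i`, `π_{-i}` defined as in the paper, the family `(π_i)_{i ∈ ℤ}`
sums to `1`, is positive, and satisfies the detailed balance equations
`(α + i⁻·γ)·π_i = (β + (i+1)⁺·θ)·π_{i+1}` for all `i ∈ ℤ`. -/
theorem stmt_3 (α β θ γ : ℝ) (hα : 0 < α) (hβ : 0 < β) (hθ : 0 < θ) (hγ : 0 < γ)
    (p₁ p₂ π₀ : ℝ)
    (hp₁ : HasSum (fun i : ℕ => α ^ (i + 1) / ∏ j ∈ Finset.Icc 1 (i + 1), (β + (j : ℝ) * θ)) p₁)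
    (hp₂ : HasSum (fun i : ℕ => β ^ (i + 1) / ∏ j ∈ Finset.Icc 1 (i + 1), (α + (j : ℝ) * γ)) p₂)
    (hπ₀ : π₀ = (1 + p₁ + p₂)⁻¹)
    (π : ℤ → ℝ)
    (hπpos : ∀ i : ℕ, π (i : ℤ) = π₀ * α ^ i / ∏ j ∈ Finset.Icc 1 i, (β + (j : ℝ) * θ))
    (hπneg : ∀ i : ℕ, π (-(i : ℤ)) = π₀ * β ^ i / ∏ j ∈ Finset.Icc 1 i, (α + (j : ℝ) * γ)) :
    HasSum π 1 ∧ (∀ i : ℤ, 0 < π i) ∧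
      ∀ i : ℤ, (α + ((max (-i) 0 : ℤ) : ℝ) * γ) * π i
        = (β + ((max (i + 1) 0 : ℤ) : ℝ) * θ) * π (i + 1) := by
  have hprodβ : ∀ n : ℕ, 0 < ∏ j ∈ Finset.Icc 1 n, (β + (j : ℝ) * θ) :=
    fun n => Finset.prod_pos fun j _ => by positivity
  have hprodα : ∀ n : ℕ, 0 < ∏ j ∈ Finset.Icc 1 n, (α + (j : ℝ) * γ) :=
    fun n => Finset.prod_pos fun j _ => by positivity
  have hp₁nn : 0 ≤ p₁ := hp₁.nonneg fun i => by positivity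
  have hp₂nn : 0 ≤ p₂ := hp₂.nonneg fun i => by positivity
  have hden : (0:ℝ) < 1 + p₁ + p₂ := by linarith
  have hπ₀pos : 0 < π₀ := by rw [hπ₀]; exact inv_pos.mpr hden
  refine ⟨?_, ?_, ?_⟩
  · -- HasSum π 1
    have hpos : HasSum (fun n : ℕ => π n) (π₀ * (p₁ + 1)) := by
      have h1 : HasSum (fun n : ℕ => α ^ n / ∏ j ∈ Finset.Icc 1 n, (β + (j : ℝ) * θ))
          (p₁ + ∑ i ∈ Finset.range 1,
            α ^ i / ∏ j ∈ Finset.Icc 1 i, (β + (j : ℝ) * θ)) :=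
        (hasSum_nat_add_iff 1).mp hp₁
      simp only [Finset.range_one, Finset.sum_singleton, pow_zero, Finset.Icc_self,
        Finset.Icc_eq_empty_of_lt Nat.zero_lt_one, Finset.prod_empty, div_one] at h1
      have := h1.mul_left π₀
      refine this.congr_fun fun n => ?_
      rw [hπpos n, mul_div_assoc]
    have hneg : HasSum (fun n : ℕ => π (-(n + 1 : ℕ) : ℤ)) (π₀ * p₂) := by
      have := hp₂.mul_left π₀
      refine this.congr_fun fun n => ?_
      rw [hπneg (n + 1), mul_div_assoc]
    have htot : HasSum π (π₀ * (p₁ + 1) + π₀ * p₂) := by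
      refine HasSum.of_nat_of_neg_add_one hpos ?_
      refine hneg.congr_fun fun n => by norm_num
    have : π₀ * (p₁ + 1) + π₀ * p₂ = 1 := by
      rw [hπ₀]
      field_simp
      ring
    rwa [this] at htot
  · intro i
    obtain ⟨n, rfl | rfl⟩ := i.eq_nat_or_neg
    · rw [hπpos n]; positivity
    · rw [hπneg n]; positivity
  · intro i
    obtain ⟨n, rfl | rfl⟩ := i.eq_nat_or_neg
    · have h1 : ((max (-(n:ℤ)) 0 : ℤ) : ℝ) = 0 := by
        rw [max_eq_right (by omega : -(n:ℤ) ≤ 0)]; simp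
      have h2 : ((max ((n:ℤ) + 1) 0 : ℤ) : ℝ) = (n:ℝ) + 1 := by
        rw [max_eq_left (by omega : (0:ℤ) ≤ (n:ℤ) + 1)]; push_cast; ring
      have h3 : ((n:ℤ) + 1) = ((n + 1 : ℕ) : ℤ) := by push_cast; ring
      rw [h1, h2, h3, hπpos n, hπpos (n + 1),
        Finset.prod_Icc_succ_top (Nat.le_add_left 1 n)]
      have hne := (hprodβ n).ne'
      have hne2 : β + ((n:ℝ) + 1) * θ ≠ 0 := by positivity
      field_simp
      push_cast
      ring
    · rcases n with _ | m
      · have e0 : π (-((0:ℕ):ℤ)) = π ((0:ℕ):ℤ) := by norm_num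
        have e1 : π (-((0:ℕ):ℤ) + 1) = π ((1:ℕ):ℤ) := by norm_num
        rw [e0, e1, hπpos 0, hπpos 1]
        have hne2 : β + (1:ℝ) * θ ≠ 0 := by positivity
        norm_num [Finset.Icc_self, Finset.Icc_eq_empty_of_lt Nat.zero_lt_one]
        field_simp
      · have h1 : ((max (-(-(↑(m+1):ℤ))) 0 : ℤ) : ℝ) = (m:ℝ) + 1 := by
          rw [neg_neg, max_eq_left (by omega : (0:ℤ) ≤ ((m+1:ℕ):ℤ))]; push_cast; ring
        have h2 : ((max ((-(↑(m+1):ℤ)) + 1) 0 : ℤ) : ℝ) = 0 := by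
          rw [max_eq_right (by omega : (-(↑(m+1):ℤ)) + 1 ≤ 0)]; simp
        have h3 : (-(↑(m+1):ℤ)) + 1 = -((m:ℕ) : ℤ) := by push_cast; ring
        rw [h1, h2, h3, hπneg (m + 1), hπneg m,
          Finset.prod_Icc_succ_top (Nat.le_add_left 1 m)]
        have hne := (hprodα m).ne'
        have hne2 : α + ((m:ℝ) + 1) * γ ≠ 0 := by positivity
        field_simp
        push_cast
        ring
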